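/- Let X, Y, Z be finite-dimensional real normed vector spaces, let ψ : X → Y and φ : Y → Z be continuous maps, and assume cond(ψ) < ∞ and cond(φ) < ∞. Then cond(φ ∘ ψ) ≤ cond(φ) · cond(ψ). -/

import Mathlib

open scoped ENNReal NNReal

/-- Relative error ratio `R(f,x;δ) = (‖f(x+δ)−f(x)‖/‖f(x)‖) / (‖δ‖/‖x‖)`,
with values in `[0,∞]`. -/
noncomputable def relErrRatio {X Y : Type*} [NormedAddCommGroup X] [NormedAddCommGroup Y]
    (f : X → Y) (x δ : X) : ℝ≥0∞ :=
  ((‖f (x + δ) - f x‖₊ : ℝ≥0∞) / (‖f x‖₊ : ℝ≥0∞)) / ((‖δ‖₊ : ℝ≥0∞) / (‖x‖₊ : ℝ≥0∞))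

/-- Local condition number `cond(f;x)`. -/
noncomputable def condAt {X Y : Type*} [NormedAddCommGroup X] [NormedAddCommGroup Y]
    (f : X → Y) (x : X) : ℝ≥0∞ :=
  ⨅ (ε : ℝ) (_ : 0 < ε), ⨆ (δ : X) (_ : δ ≠ 0) (_ : ‖δ‖ ≤ ε * ‖x‖), relErrRatio f x δ

/-- Global condition number `cond(f)`. -/
noncomputable def condGlobal {X Y : Type*} [NormedAddCommGroup X] [NormedAddCommGroup Y]
    (f : X → Y) : ℝ≥0∞ :=
  ⨆ (x : X) (_ : x ≠ 0), condAt f x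

lemma relErrRatio_eq_zero_of_eq {X Y : Type*} [NormedAddCommGroup X] [NormedAddCommGroup Y]
    {f : X → Y} {x δ : X} (h : f (x + δ) = f x) : relErrRatio f x δ = 0 := by
  simp [relErrRatio, h]

lemma condAt_eq_zero_of_locally_const {X Y : Type*} [NormedAddCommGroup X]
    [NormedAddCommGroup Y] {f : X → Y} {x : X} (ε₀ : ℝ) (hε₀ : 0 < ε₀)
    (hc : ∀ δ : X, ‖δ‖ ≤ ε₀ * ‖x‖ → f (x + δ) = f x) : condAt f x = 0 := by
  refine le_antisymm ?_ zero_le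
  refine le_trans (iInf_le_of_le ε₀ (iInf_le_of_le hε₀ le_rfl)) ?_
  refine iSup_le fun δ => iSup_le fun _ => iSup_le fun hn => ?_
  exact le_of_eq (relErrRatio_eq_zero_of_eq (hc δ hn))

lemma condAt_eq_top_aux {X Y : Type*} [NormedAddCommGroup X] [NormedAddCommGroup Y]
    {f : X → Y} {x : X} (hx : x ≠ 0) (h0 : f x = 0)
    (h : ∀ ε > (0 : ℝ), ∃ δ : X, ‖δ‖ ≤ ε * ‖x‖ ∧ f (x + δ) ≠ f x) : condAt f x = ⊤ := by
  rw [eq_top_iff, condAt]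
  refine le_iInf fun ε => le_iInf fun hε => ?_
  obtain ⟨δ, hδn, hδ⟩ := h ε hε
  have hδ0 : δ ≠ 0 := by
    rintro rfl
    exact hδ (by simp)
  refine le_trans ?_ (le_iSup_of_le δ (le_iSup_of_le hδ0 (le_iSup_of_le hδn le_rfl)))
  have hne : (‖f (x + δ) - f x‖₊ : ℝ≥0∞) ≠ 0 := by
    simpa [sub_eq_zero] using hδ
  have hnum : (‖f (x + δ) - f x‖₊ : ℝ≥0∞) / (‖f x‖₊ : ℝ≥0∞) = ⊤ := by
    rw [h0, sub_zero] at hne ⊢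
    simpa using ENNReal.div_zero hne
  have hden : (‖δ‖₊ : ℝ≥0∞) / (‖x‖₊ : ℝ≥0∞) ≠ ⊤ :=
    (ENNReal.div_lt_top ENNReal.coe_ne_top (by simpa using hx)).ne
  rw [relErrRatio, hnum, ENNReal.top_div_of_ne_top hden]

lemma mul_aux {a b t : ℝ≥0∞} (ha : a ≠ ⊤) (hb : b ≠ ⊤)
    (h : ∀ c d : ℝ≥0∞, a < c → b < d → t ≤ c * d) : t ≤ a * b := by
  have key : ∀ n : ℕ, t ≤ (a + ((n : ℝ≥0∞))⁻¹) * (b + ((n : ℝ≥0∞))⁻¹) := fun n =>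
    h _ _ (ENNReal.lt_add_right ha (ENNReal.inv_ne_zero.2 (ENNReal.natCast_ne_top n)))
      (ENNReal.lt_add_right hb (ENNReal.inv_ne_zero.2 (ENNReal.natCast_ne_top n)))
  have h1 : Filter.Tendsto (fun n : ℕ => a + ((n : ℝ≥0∞))⁻¹) Filter.atTop (nhds a) := by
    simpa using Filter.Tendsto.const_add a ENNReal.tendsto_inv_nat_nhds_zero
  have h2 : Filter.Tendsto (fun n : ℕ => b + ((n : ℝ≥0∞))⁻¹) Filter.atTop (nhds b) := by
    simpa using Filter.Tendsto.const_add b ENNReal.tendsto_inv_nat_nhds_zero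
  exact ge_of_tendsto' (ENNReal.Tendsto.mul h1 (Or.inr hb) h2 (Or.inr ha)) key

lemma relErrRatio_comp_eq {X Y Z : Type*} [NormedAddCommGroup X] [NormedAddCommGroup Y]
    [NormedAddCommGroup Z] (ψ : X → Y) (φ : Y → Z) (x δ : X) (hy : ψ x ≠ 0)
    (hne : ψ (x + δ) ≠ ψ x) :
    relErrRatio (φ ∘ ψ) x δ = relErrRatio φ (ψ x) (ψ (x + δ) - ψ x) * relErrRatio ψ x δ := by
  have h1 : ψ x + (ψ (x + δ) - ψ x) = ψ (x + δ) := by abel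
  have ht0 : (‖ψ (x + δ) - ψ x‖₊ : ℝ≥0∞) / (‖ψ x‖₊ : ℝ≥0∞) ≠ 0 :=
    ENNReal.div_ne_zero.2 ⟨by simpa [sub_eq_zero] using hne, ENNReal.coe_ne_top⟩
  have htt : (‖ψ (x + δ) - ψ x‖₊ : ℝ≥0∞) / (‖ψ x‖₊ : ℝ≥0∞) ≠ ⊤ :=
    (ENNReal.div_lt_top ENNReal.coe_ne_top (by simpa using hy)).ne
  simp only [relErrRatio, Function.comp_apply, h1]
  set N := (‖φ (ψ (x + δ)) - φ (ψ x)‖₊ : ℝ≥0∞) / (‖φ (ψ x)‖₊ : ℝ≥0∞)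
  set t := (‖ψ (x + δ) - ψ x‖₊ : ℝ≥0∞) / (‖ψ x‖₊ : ℝ≥0∞)
  set s := (‖δ‖₊ : ℝ≥0∞) / (‖x‖₊ : ℝ≥0∞)
  show N / s = N / t * ((‖ψ (x + δ) - ψ x‖₊ : ℝ≥0∞) / (‖ψ x‖₊ : ℝ≥0∞) / s)
  rw [show (‖ψ (x + δ) - ψ x‖₊ : ℝ≥0∞) / (‖ψ x‖₊ : ℝ≥0∞) = t from rfl]
  rw [div_eq_mul_inv N t, div_eq_mul_inv t s, mul_assoc, ← mul_assoc t⁻¹,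
    ENNReal.inv_mul_cancel ht0 htt, one_mul, ← div_eq_mul_inv]

theorem condGlobal_comp_le {X Y Z : Type*}
    [NormedAddCommGroup X] [NormedSpace ℝ X] [FiniteDimensional ℝ X]
    [NormedAddCommGroup Y] [NormedSpace ℝ Y] [FiniteDimensional ℝ Y]
    [NormedAddCommGroup Z] [NormedSpace ℝ Z] [FiniteDimensional ℝ Z]
    (ψ : X → Y) (φ : Y → Z) (hψc : Continuous ψ) (hφc : Continuous φ)
    (hψ : condGlobal ψ < ⊤) (hφ : condGlobal φ < ⊤) :
    condGlobal (φ ∘ ψ) ≤ condGlobal φ * condGlobal ψ := by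
  refine iSup_le fun x => iSup_le fun hx => ?_
  have hxnorm : (0 : ℝ) < ‖x‖ := norm_pos_iff.2 hx
  by_cases hA : ∃ ε > (0 : ℝ), ∀ δ : X, ‖δ‖ ≤ ε * ‖x‖ → ψ (x + δ) = ψ x
  · obtain ⟨ε₀, hε₀, hc⟩ := hA
    have h0 : condAt (φ ∘ ψ) x = 0 :=
      condAt_eq_zero_of_locally_const ε₀ hε₀ fun δ hδ => by
        simp [Function.comp, hc δ hδ]
    simp [h0]
  push_neg at hA
  have hψx : ψ x ≠ 0 := by
    intro h0
    have htop : condAt ψ x = ⊤ := condAt_eq_top_aux hx h0 hA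
    have hle : condAt ψ x ≤ condGlobal ψ := le_iSup_of_le x (le_iSup_of_le hx le_rfl)
    rw [htop] at hle
    exact hψ.ne (top_le_iff.1 hle)
  have hynorm : (0 : ℝ) < ‖ψ x‖ := norm_pos_iff.2 hψx
  by_cases hB : ∃ ε > (0 : ℝ), ∀ η : Y, ‖η‖ ≤ ε * ‖ψ x‖ → φ (ψ x + η) = φ (ψ x)
  · obtain ⟨ε₁, hε₁, hc⟩ := hB
    obtain ⟨r, hr, H⟩ := Metric.continuousAt_iff.1 hψc.continuousAt (ε₁ * ‖ψ x‖)
      (mul_pos hε₁ hynorm)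
    have h0 : condAt (φ ∘ ψ) x = 0 := by
      refine condAt_eq_zero_of_locally_const (r / (2 * ‖x‖)) (by positivity) fun δ hδ => ?_
      have hδr : ‖δ‖ < r := by
        have heq : r / (2 * ‖x‖) * ‖x‖ = r / 2 := by field_simp
        rw [heq] at hδ
        linarith
      have hd := H (show dist (x + δ) x < r by simpa [dist_eq_norm] using hδr)
      rw [dist_eq_norm] at hd
      have := hc (ψ (x + δ) - ψ x) hd.le
      rw [show ψ x + (ψ (x + δ) - ψ x) = ψ (x + δ) by abel] at this
      simpa [Function.comp] using this
    simp [h0]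
  push_neg at hB
  have hB' : ∀ ε > (0 : ℝ), ∃ η : Y, ‖η‖ ≤ ε * ‖ψ x‖ ∧ φ (ψ x + η) ≠ φ (ψ x) := hB
  have hφy : φ (ψ x) ≠ 0 := by
    intro h0
    have htop : condAt φ (ψ x) = ⊤ := condAt_eq_top_aux hψx h0 hB'
    have hle : condAt φ (ψ x) ≤ condGlobal φ := le_iSup_of_le (ψ x) (le_iSup_of_le hψx le_rfl)
    rw [htop] at hle
    exact hφ.ne (top_le_iff.1 hle)
  refine mul_aux hφ.ne hψ.ne fun c d hc hd => ?_
  -- extract a ball for φ where the ratio is < c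
  have hle1 : condAt φ (ψ x) ≤ condGlobal φ := le_iSup_of_le (ψ x) (le_iSup_of_le hψx le_rfl)
  have h1 : condAt φ (ψ x) < c := lt_of_le_of_lt hle1 hc
  rw [condAt, iInf_lt_iff] at h1
  obtain ⟨εφ, h1⟩ := h1
  rw [iInf_lt_iff] at h1
  obtain ⟨hεφ, h1⟩ := h1
  -- extract a ball for ψ where the ratio is < d
  have hle2 : condAt ψ x ≤ condGlobal ψ := le_iSup_of_le x (le_iSup_of_le hx le_rfl)
  have h2 : condAt ψ x < d := lt_of_le_of_lt hle2 hd
  rw [condAt, iInf_lt_iff] at h2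
  obtain ⟨εψ, h2⟩ := h2
  rw [iInf_lt_iff] at h2
  obtain ⟨hεψ, h2⟩ := h2
  -- continuity: get a ball mapped into the φ-ball
  obtain ⟨r, hr, H⟩ := Metric.continuousAt_iff.1 hψc.continuousAt (εφ * ‖ψ x‖)
    (mul_pos hεφ hynorm)
  set ε₂ : ℝ := r / (2 * ‖x‖) with hε₂def
  have hε₂ : 0 < ε₂ := by positivity
  set ε : ℝ := min εψ ε₂ with hεdef
  have hε : 0 < ε := lt_min hεψ hε₂
  refine le_trans (iInf_le_of_le ε (iInf_le_of_le hε ?_)) (le_refl (c * d))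
  refine iSup_le fun δ => iSup_le fun hδ0 => iSup_le fun hδn => ?_
  have hδψ : ‖δ‖ ≤ εψ * ‖x‖ :=
    le_trans hδn (mul_le_mul_of_nonneg_right (min_le_left _ _) (norm_nonneg x))
  have hδ2 : ‖δ‖ ≤ ε₂ * ‖x‖ :=
    le_trans hδn (mul_le_mul_of_nonneg_right (min_le_right _ _) (norm_nonneg x))
  have hδr : ‖δ‖ < r := by
    have heq : ε₂ * ‖x‖ = r / 2 := by rw [hε₂def]; field_simp
    rw [heq] at hδ2
    linarith
  have hη : ‖ψ (x + δ) - ψ x‖ ≤ εφ * ‖ψ x‖ := by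
    have hd := H (show dist (x + δ) x < r by simpa [dist_eq_norm] using hδr)
    rw [dist_eq_norm] at hd
    exact hd.le
  by_cases hη0 : ψ (x + δ) = ψ x
  · have : relErrRatio (φ ∘ ψ) x δ = 0 :=
      relErrRatio_eq_zero_of_eq (by simp [Function.comp, hη0])
    simp [this]
  · have hηne : ψ (x + δ) - ψ x ≠ 0 := sub_ne_zero.2 hη0
    have hbψ : relErrRatio ψ x δ ≤
        ⨆ (δ' : X) (_ : δ' ≠ 0) (_ : ‖δ'‖ ≤ εψ * ‖x‖), relErrRatio ψ x δ' :=
      le_iSup_of_le δ (le_iSup_of_le hδ0 (le_iSup_of_le hδψ le_rfl))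
    have hbφ : relErrRatio φ (ψ x) (ψ (x + δ) - ψ x) ≤
        ⨆ (η : Y) (_ : η ≠ 0) (_ : ‖η‖ ≤ εφ * ‖ψ x‖), relErrRatio φ (ψ x) η :=
      le_iSup_of_le (ψ (x + δ) - ψ x) (le_iSup_of_le hηne (le_iSup_of_le hη le_rfl))
    have hRψ : relErrRatio ψ x δ < d := lt_of_le_of_lt hbψ h2
    have hRφ : relErrRatio φ (ψ x) (ψ (x + δ) - ψ x) < c := lt_of_le_of_lt hbφ h1
    rw [relErrRatio_comp_eq ψ φ x δ hψx hη0]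
    exact mul_le_mul' hRφ.le hRψ.le
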